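/- Let g ≥ 1 be an integer. For every k ∈ {1,…,2g}, the number of a ∈ S_- whose k-th entry equals 0 is 2^{2g−2} − 2^{g−1}, and the number of a ∈ S_- whose k-th entry equals 1/2 is 2^{2g−2}. -/

import Mathlib

open Complex

noncomputable section

/-- Index of the `i`-th coordinate among the first `g` coordinates of `Fin (2*g)`. -/
def idxU {g : ℕ} (i : Fin g) : Fin (2 * g) := ⟨i.1, by have := i.isLt; omega⟩

/-- Index of the `i`-th coordinate among the last `g` coordinates of `Fin (2*g)`. -/
def idxL {g : ℕ} (i : Fin g) : Fin (2 * g) := ⟨g + i.1, by have := i.isLt; omega⟩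

/-- The upper half `a_u` of a `2g`-vector. -/
def vecU {g : ℕ} (a : Fin (2 * g) → ℝ) : Fin g → ℝ := fun i => a (idxU i)

/-- The lower half `a_l` of a `2g`-vector. -/
def vecL {g : ℕ} (a : Fin (2 * g) → ℝ) : Fin g → ℝ := fun i => a (idxL i)

/-- The set `S₋` of odd half-integer characteristics. -/
def Sminus (g : ℕ) : Set (Fin (2 * g) → ℝ) :=
  {a | (∀ k, a k = 0 ∨ a k = 1 / 2) ∧
    Complex.exp (4 * Real.pi * Complex.I * ((∑ i, vecU a i * vecL a i : ℝ) : ℂ)) = -1}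

/-- The set `S₊` of even half-integer characteristics. -/
def Splus (g : ℕ) : Set (Fin (2 * g) → ℝ) :=
  {a | ∀ k, a k = 0 ∨ a k = 1 / 2} \ Sminus g

open Finset

variable {n : ℕ}

private def flipAt (j : Fin n) (y : Fin n → Bool) : Fin n → Bool := Function.update y j (!y j)

private lemma flipAt_flipAt (j : Fin n) (y : Fin n → Bool) : flipAt j (flipAt j y) = y := by
  unfold flipAt
  rw [Function.update_self, Function.update_idem, Bool.not_not, Function.update_eq_self]

/-- flip involution trick: if P flips under flipping coordinate j, then filter P has card 2^(n-1). -/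
lemma card_filter_flip (j : Fin n) (P : (Fin n → Bool) → Prop) [DecidablePred P]
    (hP : ∀ y, P (flipAt j y) ↔ ¬ P y) :
    (univ.filter P).card = 2 ^ (n - 1) := by
  have hcard : (univ.filter P).card = (univ.filter (fun y => ¬ P y)).card := by
    apply Finset.card_nbij' (flipAt j) (flipAt j)
    · intro y hy; simp only [Finset.mem_coe, mem_filter, mem_univ, true_and] at hy ⊢
      rw [hP]; simpa using hy
    · intro y hy; simp only [Finset.mem_coe, mem_filter, mem_univ, true_and] at hy ⊢
      rw [hP]; exact hy
    · intro y _; exact flipAt_flipAt j y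
    · intro y _; exact flipAt_flipAt j y
  have htot : (univ.filter P).card + (univ.filter (fun y => ¬ P y)).card = 2 ^ n := by
    rw [Finset.card_filter_add_card_filter_not]
    simp
  have hn : 1 ≤ n := Nat.one_le_iff_ne_zero.mpr (by rintro rfl; exact j.elim0)
  have h2 : 2 ^ n = 2 ^ (n - 1) * 2 := by
    rw [← pow_succ]; congr 1; omega
  omega

private def dot2 {m : ℕ} (x y : Fin m → Bool) : ZMod 2 := ∑ i, if x i && y i then 1 else 0

private lemma dot2_flip {m : ℕ} (x y : Fin m → Bool) (j : Fin m) (hx : x j = true) :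
    dot2 x (flipAt j y) = dot2 x y + 1 := by
  unfold dot2
  rw [← Finset.sum_erase_add _ _ (Finset.mem_univ j), ← Finset.sum_erase_add _ _ (Finset.mem_univ j)]
  have hsum : ∑ i ∈ Finset.univ.erase j, (if x i && flipAt j y i then 1 else 0 : ZMod 2)
      = ∑ i ∈ Finset.univ.erase j, (if x i && y i then 1 else 0 : ZMod 2) := by
    apply Finset.sum_congr rfl
    intro i hi
    have : flipAt j y i = y i := Function.update_of_ne (Finset.mem_erase.mp hi).1 _ _
    rw [this]
  rw [hsum, add_assoc]
  congr 1
  have hj : flipAt j y j = !y j := Function.update_self _ _ _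
  rw [hj, hx]
  cases y j <;> decide

private lemma ne_one_iff_zmod2 (a : ZMod 2) : ¬ a = 1 ↔ a = 0 := by
  revert a; decide

/-- for x with some true coordinate, half the y give odd dot. -/
private lemma card_dot2_one {m : ℕ} (x : Fin m → Bool) (j : Fin m) (hx : x j = true) :
    (univ.filter (fun y => dot2 x y = 1)).card = 2 ^ (m - 1) := by
  apply card_filter_flip j
  intro y
  rw [dot2_flip x y j hx]
  constructor
  · intro h h2; rw [h2] at h; revert h; decide
  · intro h
    have : dot2 x y = 0 := (ne_one_iff_zmod2 _).mp h
    rw [this]; decide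

private lemma dot2_zero {m : ℕ} (y : Fin m → Bool) :
    dot2 (fun _ => false) y = 0 := by
  unfold dot2; simp

/-- count of x with fixed coordinate value -/
private lemma card_coord {m : ℕ} (j : Fin m) (c : Bool) :
    (univ.filter (fun x : Fin m → Bool => x j = c)).card = 2 ^ (m - 1) := by
  apply card_filter_flip j
  intro y
  have : flipAt j y j = !y j := Function.update_self _ _ _
  rw [this]
  cases y j <;> cases c <;> simp

/-- fiberwise decomposition for pair predicates -/
private lemma card_pair_fiber {m : ℕ} (P : (Fin m → Bool) → (Fin m → Bool) → Prop)
    [∀ x y, Decidable (P x y)] :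
    (univ.filter (fun p : (Fin m → Bool) × (Fin m → Bool) => P p.1 p.2)).card
      = ∑ x : Fin m → Bool, (univ.filter (fun y => P x y)).card := by
  rw [Finset.card_eq_sum_card_fiberwise (f := Prod.fst) (t := univ) (fun _ _ => mem_univ _)]
  apply Finset.sum_congr rfl
  intro x _
  apply Finset.card_nbij' (fun p => p.2) (fun y => (x, y))
  · intro p hp
    simp only [Finset.mem_coe, mem_filter, mem_univ, true_and] at hp ⊢
    obtain ⟨h1, h2⟩ := hp
    rwa [← h2]
  · intro y hy
    simp only [Finset.mem_coe, mem_filter, mem_univ, true_and] at hy ⊢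
    exact ⟨hy, trivial⟩
  · intro p hp
    simp only [Finset.mem_coe, mem_filter, mem_univ, true_and] at hp
    exact Prod.ext hp.2.symm rfl
  · intro y _; rfl

private lemma card_pair_count {m : ℕ} (hm : 1 ≤ m) (j : Fin m) (c : Bool) :
    (univ.filter (fun p : (Fin m → Bool) × (Fin m → Bool) => dot2 p.1 p.2 = 1 ∧ p.1 j = c)).card
      = if c then 2 ^ (2 * m - 2) else 2 ^ (2 * m - 2) - 2 ^ (m - 1) := by
  rw [card_pair_fiber (fun x y => dot2 x y = 1 ∧ x j = c)]
  have hsplit : ∀ x : Fin m → Bool,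
      (univ.filter (fun y => dot2 x y = 1 ∧ x j = c)).card
        = if x j = c then (univ.filter (fun y => dot2 x y = 1)).card else 0 := by
    intro x
    by_cases h : x j = c
    · simp [h]
    · simp [h]
  simp only [hsplit]
  rw [← Finset.sum_filter]
  have hpow : 2 ^ (m - 1) * 2 ^ (m - 1) = 2 ^ (2 * m - 2) := by
    rw [← pow_add]; congr 1; omega
  cases c with
  | true =>
    simp only [if_true]
    have : ∀ x ∈ univ.filter (fun x : Fin m → Bool => x j = true),
        (univ.filter (fun y => dot2 x y = 1)).card = 2 ^ (m - 1) := by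
      intro x hx
      simp only [Finset.mem_coe, mem_filter, mem_univ, true_and] at hx
      exact card_dot2_one x j hx
    rw [Finset.sum_congr rfl this, Finset.sum_const, card_coord, smul_eq_mul, hpow]
  | false =>
    simp only [Bool.false_eq_true, if_false]
    set S := univ.filter (fun x : Fin m → Bool => x j = false) with hS
    have h0 : (fun _ : Fin m => false) ∈ S := by simp [hS]
    rw [← Finset.sum_erase_add _ _ h0]
    have hterm0 : (univ.filter (fun y => dot2 (fun _ : Fin m => false) y = 1)).card = 0 := by
      rw [Finset.card_eq_zero, Finset.filter_eq_empty_iff]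
      intro y _
      rw [dot2_zero]; decide
    rw [hterm0, add_zero]
    have : ∀ x ∈ S.erase (fun _ => false),
        (univ.filter (fun y => dot2 x y = 1)).card = 2 ^ (m - 1) := by
      intro x hx
      rw [Finset.mem_erase] at hx
      have : ∃ i, x i = true := by
        by_contra hc
        push_neg at hc
        exact hx.1 (funext fun i => by simpa using hc i)
      obtain ⟨i, hi⟩ := this
      exact card_dot2_one x i hi
    rw [Finset.sum_congr rfl this, Finset.sum_const, smul_eq_mul,
      Finset.card_erase_of_mem h0]
    have hScard : S.card = 2 ^ (m - 1) := card_coord j false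
    rw [hScard, Nat.sub_mul, hpow, one_mul]

private lemma dot2_comm {m : ℕ} (x y : Fin m → Bool) : dot2 x y = dot2 y x := by
  unfold dot2
  apply Finset.sum_congr rfl
  intro i _
  rw [Bool.and_comm]

private lemma card_pair_count' {m : ℕ} (hm : 1 ≤ m) (j : Fin m) (c : Bool) :
    (univ.filter (fun p : (Fin m → Bool) × (Fin m → Bool) => dot2 p.1 p.2 = 1 ∧ p.2 j = c)).card
      = if c then 2 ^ (2 * m - 2) else 2 ^ (2 * m - 2) - 2 ^ (m - 1) := by
  rw [← card_pair_count hm j c]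
  apply Finset.card_nbij' Prod.swap Prod.swap
  · intro p hp
    simp only [Finset.mem_coe, mem_filter, mem_univ, true_and] at hp ⊢
    exact ⟨(dot2_comm _ _).trans hp.1, hp.2⟩
  · intro p hp
    simp only [Finset.mem_coe, mem_filter, mem_univ, true_and] at hp ⊢
    exact ⟨(dot2_comm _ _).trans hp.1, hp.2⟩
  · intro p _; rfl
  · intro p _; rfl

private def glue {g : ℕ} (x y : Fin g → Bool) : Fin (2 * g) → Bool :=
  fun j => if h : j.1 < g then x ⟨j.1, h⟩ else y ⟨j.1 - g, by have := j.isLt; omega⟩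

private lemma glue_idxU {g : ℕ} (x y : Fin g → Bool) (i : Fin g) : glue x y (idxU i) = x i := by
  simp [glue, idxU, i.isLt]

private lemma glue_idxL {g : ℕ} (x y : Fin g → Bool) (i : Fin g) : glue x y (idxL i) = y i := by
  have h : ¬ (g + i.1 < g) := by omega
  simp [glue, idxL, h]

private lemma glue_eq {g : ℕ} (b : Fin (2 * g) → Bool) :
    glue (fun i => b (idxU i)) (fun i => b (idxL i)) = b := by
  funext j
  unfold glue
  by_cases h : j.1 < g
  · rw [dif_pos h]
    exact congrArg b (Fin.ext rfl)
  · rw [dif_neg h]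
    exact congrArg b (Fin.ext (show g + (j.1 - g) = j.1 by omega))

/-- main boolean count -/
private lemma card_bool_count {g : ℕ} (hg : 1 ≤ g) (k : Fin (2 * g)) (c : Bool) :
    (univ.filter (fun b : Fin (2 * g) → Bool =>
        dot2 (fun i => b (idxU i)) (fun i => b (idxL i)) = 1 ∧ b k = c)).card
      = if c then 2 ^ (2 * g - 2) else 2 ^ (2 * g - 2) - 2 ^ (g - 1) := by
  by_cases hk : k.1 < g
  · rw [← card_pair_count hg ⟨k.1, hk⟩ c]
    apply Finset.card_nbij' (fun b => ((fun i => b (idxU i)), (fun i => b (idxL i))))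
      (fun p => glue p.1 p.2)
    · intro b hb
      simp only [Finset.mem_coe, mem_filter, mem_univ, true_and] at hb ⊢
      refine ⟨hb.1, ?_⟩
      have : idxU (⟨k.1, hk⟩ : Fin g) = k := Fin.ext rfl
      rw [this]; exact hb.2
    · intro p hp
      simp only [Finset.mem_coe, mem_filter, mem_univ, true_and] at hp ⊢
      constructor
      · have h1 : (fun i => glue p.1 p.2 (idxU i)) = p.1 := funext (glue_idxU p.1 p.2)
        have h2 : (fun i => glue p.1 p.2 (idxL i)) = p.2 := funext (glue_idxL p.1 p.2)
        rw [h1, h2]; exact hp.1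
      · have : k = idxU (⟨k.1, hk⟩ : Fin g) := Fin.ext rfl
        rw [this, glue_idxU]; exact hp.2
    · intro b _; exact glue_eq b
    · intro p _
      exact Prod.ext (funext (glue_idxU p.1 p.2)) (funext (glue_idxL p.1 p.2))
  · have hk2 : k.1 - g < g := by have := k.isLt; omega
    rw [← card_pair_count' hg ⟨k.1 - g, hk2⟩ c]
    apply Finset.card_nbij' (fun b => ((fun i => b (idxU i)), (fun i => b (idxL i))))
      (fun p => glue p.1 p.2)
    · intro b hb
      simp only [Finset.mem_coe, mem_filter, mem_univ, true_and] at hb ⊢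
      refine ⟨hb.1, ?_⟩
      have : idxL (⟨k.1 - g, hk2⟩ : Fin g) = k := Fin.ext (by simp [idxL]; omega)
      rw [this]; exact hb.2
    · intro p hp
      simp only [Finset.mem_coe, mem_filter, mem_univ, true_and] at hp ⊢
      constructor
      · have h1 : (fun i => glue p.1 p.2 (idxU i)) = p.1 := funext (glue_idxU p.1 p.2)
        have h2 : (fun i => glue p.1 p.2 (idxL i)) = p.2 := funext (glue_idxL p.1 p.2)
        rw [h1, h2]; exact hp.1
      · have : k = idxL (⟨k.1 - g, hk2⟩ : Fin g) := Fin.ext (by simp [idxL]; omega)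
        rw [this, glue_idxL]; exact hp.2
    · intro b _; exact glue_eq b
    · intro p _
      exact Prod.ext (funext (glue_idxU p.1 p.2)) (funext (glue_idxL p.1 p.2))

private noncomputable def b2r (c : Bool) : ℝ := if c then 1/2 else 0

private lemma b2r_inj : Function.Injective b2r := by
  intro c c' h
  cases c <;> cases c' <;> first | rfl | (exfalso; revert h; unfold b2r; norm_num)

private noncomputable def FB {n : ℕ} (b : Fin n → Bool) : Fin n → ℝ := fun k => b2r (b k)

private lemma FB_inj {n : ℕ} : Function.Injective (FB (n := n)) := by
  intro b b' h
  funext j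
  exact b2r_inj (congrFun h j)

private lemma sum_FB {g : ℕ} (b : Fin (2 * g) → Bool) :
    ∑ i, vecU (FB b) i * vecL (FB b) i
      = ((univ.filter fun i => b (idxU i) && b (idxL i)).card : ℝ) / 4 := by
  have hterm : ∀ i : Fin g, vecU (FB b) i * vecL (FB b) i
      = if b (idxU i) && b (idxL i) then (1/4 : ℝ) else 0 := by
    intro i
    show b2r (b (idxU i)) * b2r (b (idxL i)) = _
    cases b (idxU i) <;> cases b (idxL i) <;> simp [b2r] <;> norm_num
  rw [Finset.sum_congr rfl (fun i _ => hterm i)]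
  rw [← Finset.sum_filter, Finset.sum_const, nsmul_eq_mul]
  ring

private lemma dot2_cast {m : ℕ} (x y : Fin m → Bool) :
    dot2 x y = (((univ.filter fun i => x i && y i).card : ℕ) : ZMod 2) := by
  unfold dot2
  rw [Finset.sum_boole]

private lemma zmod2_one_iff_odd (m : ℕ) : ((m : ZMod 2) = 1) ↔ Odd m := by
  rw [Nat.odd_iff]
  have h : ((m % 2 : ℕ) : ZMod 2) = (m : ZMod 2) := ZMod.natCast_mod m 2
  rcases Nat.mod_two_eq_zero_or_one m with h0 | h1
  · rw [h0] at h
    simp only [Nat.cast_zero] at h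
    constructor
    · intro hc; rw [← h] at hc; exact absurd hc (by decide)
    · intro hc; omega
  · rw [h1] at h
    simp only [Nat.cast_one] at h
    constructor
    · intro _; exact h1
    · intro _; exact h.symm

private lemma exp_odd_iff (m : ℕ) :
    Complex.exp (4 * Real.pi * Complex.I * (((m : ℝ) / 4 : ℝ) : ℂ)) = -1 ↔ Odd m := by
  have harg : (4 * (Real.pi : ℂ) * Complex.I * (((m : ℝ) / 4 : ℝ) : ℂ))
      = (m : ℕ) * ((Real.pi : ℂ) * Complex.I) := by
    push_cast
    ring
  rw [harg, Complex.exp_nat_mul, Complex.exp_pi_mul_I]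
  constructor
  · intro h
    rcases Nat.even_or_odd m with he | ho
    · rw [he.neg_one_pow] at h; exact absurd h (by norm_num)
    · exact ho
  · intro ho
    exact ho.neg_one_pow

private lemma mem_Sminus_FB {g : ℕ} (b : Fin (2 * g) → Bool) :
    FB b ∈ Sminus g ↔ dot2 (fun i => b (idxU i)) (fun i => b (idxL i)) = 1 := by
  constructor
  · intro ⟨_, h2⟩
    rw [sum_FB] at h2
    rw [dot2_cast, zmod2_one_iff_odd]
    exact (exp_odd_iff _).mp h2
  · intro h
    refine ⟨fun j => ?_, ?_⟩
    · show b2r (b j) = 0 ∨ b2r (b j) = 1/2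
      cases b j
      · left; rfl
      · right; rfl
    · rw [sum_FB]
      apply (exp_odd_iff _).mpr
      rw [dot2_cast, zmod2_one_iff_odd] at h
      exact h

private lemma set_eq {g : ℕ} (k : Fin (2 * g)) (c : Bool) :
    {a : Fin (2 * g) → ℝ | a ∈ Sminus g ∧ a k = b2r c}
      = FB '' {b | dot2 (fun i => b (idxU i)) (fun i => b (idxL i)) = 1 ∧ b k = c} := by
  classical
  ext a
  constructor
  · rintro ⟨hmem, hak⟩
    set b : Fin (2 * g) → Bool := fun j => if a j = 1/2 then true else false with hb
    have hFB : FB b = a := by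
      funext j
      rcases hmem.1 j with h | h
      · have : b j = false := by
          rw [hb]; simp only; rw [if_neg]; rw [h]; norm_num
        show b2r (b j) = a j
        rw [this, h]; rfl
      · have : b j = true := by rw [hb]; simp only; rw [if_pos h]
        show b2r (b j) = a j
        rw [this, h]; rfl
    refine ⟨b, ⟨?_, ?_⟩, hFB⟩
    · exact (mem_Sminus_FB b).mp (hFB ▸ hmem)
    · apply b2r_inj
      show b2r (b k) = b2r c
      calc b2r (b k) = FB b k := rfl
        _ = a k := by rw [hFB]
        _ = b2r c := hak
  · rintro ⟨b, ⟨hd, hbk⟩, rfl⟩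
    exact ⟨(mem_Sminus_FB b).mpr hd, by show b2r (b k) = b2r c; rw [hbk]⟩

private lemma ncard_eq {g : ℕ} (k : Fin (2 * g)) (c : Bool) :
    Nat.card {a : Fin (2 * g) → ℝ | a ∈ Sminus g ∧ a k = b2r c}
      = (univ.filter (fun b : Fin (2 * g) → Bool =>
          dot2 (fun i => b (idxU i)) (fun i => b (idxL i)) = 1 ∧ b k = c)).card := by
  classical
  rw [Nat.card_coe_set_eq, set_eq, Set.ncard_image_of_injective _ FB_inj,
    ← Set.ncard_coe_finset]
  congr 1
  ext b
  simp


theorem statement9 (g : ℕ) (hg : 1 ≤ g) (k : Fin (2 * g)) :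
    Nat.card {a : Fin (2 * g) → ℝ | a ∈ Sminus g ∧ a k = 0} = 2 ^ (2 * g - 2) - 2 ^ (g - 1) ∧
      Nat.card {a : Fin (2 * g) → ℝ | a ∈ Sminus g ∧ a k = 1 / 2} = 2 ^ (2 * g - 2) := by
  constructor
  · have h0 : {a : Fin (2 * g) → ℝ | a ∈ Sminus g ∧ a k = 0}
        = {a : Fin (2 * g) → ℝ | a ∈ Sminus g ∧ a k = b2r false} := by
      ext a; simp [b2r]
    rw [h0, ncard_eq k false, card_bool_count hg k false]
    rfl
  · have h1 : {a : Fin (2 * g) → ℝ | a ∈ Sminus g ∧ a k = 1 / 2}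
        = {a : Fin (2 * g) → ℝ | a ∈ Sminus g ∧ a k = b2r true} := by
      ext a; simp [b2r]
    rw [h1, ncard_eq k true, card_bool_count hg k true]
    rfl
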